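/- Let Ω ⊆ ℝ^M be a nonempty bounded open set with Lebesgue measure, K ⊆ ℝ^N a nonempty closed convex set, and φ : [0,1] × Ω × K → (nonempty subsets of ℝ^N) an upper semicontinuous set-valued map with convex compact values such that there exist α ∈ L²(Ω, ℝ) and c > 0 with |v| ≤ α(x) + c|y| for every t, x, y and v ∈ φ(t,x,y). Assume moreover that φ is tangent to K: φ(t,x,y) ∩ T_K(y) ≠ ∅ for all t ∈ [0,1], x ∈ Ω, y ∈ K, where T_K(y) := closure(⋃_{h>0} {h⁻¹ • (k − y) : k ∈ K}). Then for every t ∈ [0,1] and every u ∈ L²(Ω, ℝ^N) with u(x) ∈ K for a.e. x ∈ Ω, there exists a measurable, square-integrable function v : Ω → ℝ^N such that v(x) ∈ φ(t, x, u(x)) ∩ T_K(u(x)) for a.e. x ∈ Ω. -/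

import Mathlib

open MeasureTheory Metric Set EMetric
open scoped ENNReal
set_option maxHeartbeats 1000000

lemma measurable_selection_aux {X : Type*} [MeasurableSpace X] {N : ℕ}
    (S : X → Set (EuclideanSpace ℝ (Fin N)))
    (hne : ∀ x, (S x).Nonempty) (hcpt : ∀ x, IsCompact (S x))
    (hmeas : ∀ (q : EuclideanSpace ℝ (Fin N)) (r : ℝ), 0 < r →
      MeasurableSet {x | (S x ∩ Metric.closedBall q r).Nonempty}) :
    ∃ v : X → EuclideanSpace ℝ (Fin N), Measurable v ∧ ∀ x, v x ∈ S x := by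
  classical
  haveI : Nonempty (EuclideanSpace ℝ (Fin N)) := ⟨0⟩
  obtain ⟨e, he⟩ : ∃ e : ℕ → EuclideanSpace ℝ (Fin N), DenseRange e :=
    ⟨TopologicalSpace.denseSeq _, TopologicalSpace.denseRange_denseSeq _⟩
  let r : ℕ → ℝ := fun k => (1/2:ℝ)^k
  have hrk : ∀ k, r k = (1/2:ℝ)^k := fun _ => rfl
  have hr : ∀ k, 0 < r k := fun k => by rw [hrk]; positivity
  have hrle : ∀ k, r (k+1) ≤ r k := by
    intro k; rw [hrk, hrk]; apply pow_le_pow_of_le_one <;> norm_num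
  have hrlim : Filter.Tendsto r Filter.atTop (nhds 0) := by
    have : Filter.Tendsto (fun k => (1/2:ℝ)^k) Filter.atTop (nhds 0) :=
      tendsto_pow_atTop_nhds_zero_of_lt_one (by norm_num) (by norm_num)
    exact this
  have P0 : X → ℕ → Prop := fun x m => (S x ∩ closedBall (e m) (r 0)).Nonempty
  have hex0 : ∀ x, ∃ m, (S x ∩ closedBall (e m) (r 0)).Nonempty := by
    intro x
    obtain ⟨s, hs⟩ := hne x
    obtain ⟨m, hm⟩ := he.exists_dist_lt s (hr 0)
    exact ⟨m, ⟨s, hs, mem_closedBall.mpr hm.le⟩⟩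
  let Ps : ℕ → ℕ → X → ℕ → Prop := fun k j x m =>
    (S x ∩ closedBall (e m) (r (k+1))).Nonempty ∧ dist (e m) (e j) ≤ r k + r (k+1)
  let n : ℕ → X → ℕ := fun k => Nat.rec (motive := fun _ => X → ℕ)
    (fun x => Nat.find (hex0 x))
    (fun k ih x => if h : ∃ m, Ps k (ih x) x m then Nat.find h else 0) k
  have hn0 : ∀ x, n 0 x = Nat.find (hex0 x) := fun x => rfl
  have hinv : ∀ k x, (S x ∩ closedBall (e (n k x)) (r k)).Nonempty := by
    intro k
    induction k with
    | zero => intro x; exact Nat.find_spec (hex0 x)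
    | succ k ih =>
      intro x
      obtain ⟨s, hsS, hsB⟩ := ih x
      obtain ⟨m, hm⟩ := he.exists_dist_lt s (hr (k+1))
      have hPm : Ps k (n k x) x m := by
        refine ⟨⟨s, hsS, mem_closedBall.mpr hm.le⟩, ?_⟩
        calc dist (e m) (e (n k x)) ≤ dist (e m) s + dist s (e (n k x)) := dist_triangle _ _ _
          _ ≤ r (k+1) + r k := add_le_add (by rw [dist_comm]; exact hm.le) hsB
          _ = r k + r (k+1) := add_comm _ _
      have hex : ∃ m, Ps k (n k x) x m := ⟨m, hPm⟩
      have hq : n (k+1) x = Nat.find hex := dif_pos hex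
      rw [hq]
      exact (Nat.find_spec hex).1
  have hexS : ∀ k x, ∃ m, Ps k (n k x) x m := by
    intro k x
    obtain ⟨s, hsS, hsB⟩ := hinv k x
    obtain ⟨m, hm⟩ := he.exists_dist_lt s (hr (k+1))
    refine ⟨m, ⟨s, hsS, mem_closedBall.mpr hm.le⟩, ?_⟩
    calc dist (e m) (e (n k x)) ≤ dist (e m) s + dist s (e (n k x)) := dist_triangle _ _ _
      _ ≤ r (k+1) + r k := add_le_add (by rw [dist_comm]; exact hm.le) hsB
      _ = r k + r (k+1) := add_comm _ _
  have hnS : ∀ k x, n (k+1) x = Nat.find (hexS k x) := fun k x => dif_pos (hexS k x)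
  have hstep : ∀ k x, dist (e (n (k+1) x)) (e (n k x)) ≤ r k + r (k+1) := by
    intro k x
    rw [hnS k x]
    exact (Nat.find_spec (hexS k x)).2
  have hPsm : ∀ (k j i : ℕ), MeasurableSet {x | Ps k j x i} := by
    intro k j i
    have hq : {x | Ps k j x i} = {x | (S x ∩ closedBall (e i) (r (k+1))).Nonempty} ∩
        {_x : X | dist (e i) (e j) ≤ r k + r (k+1)} := rfl
    rw [hq]
    exact (hmeas _ _ (hr (k+1))).inter (MeasurableSet.const _)
  have hnm : ∀ k, Measurable (n k) := by
    intro k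
    induction k with
    | zero =>
      apply measurable_to_countable'
      intro m
      have hq : (n 0) ⁻¹' {m} = {x | (S x ∩ closedBall (e m) (r 0)).Nonempty} ∩
          ⋂ (j : ℕ) (_ : j < m), {x | (S x ∩ closedBall (e j) (r 0)).Nonempty}ᶜ := by
        ext x
        rw [mem_preimage, mem_singleton_iff, hn0 x, Nat.find_eq_iff]
        simp only [mem_inter_iff, mem_setOf_eq, mem_iInter, mem_compl_iff]
      rw [hq]
      exact (hmeas _ _ (hr 0)).inter
        (MeasurableSet.iInter fun j => MeasurableSet.iInter fun _ => (hmeas _ _ (hr 0)).compl)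
    | succ k ih =>
      apply measurable_to_countable'
      intro m
      have key : (n (k+1)) ⁻¹' {m} = ⋃ j : ℕ, (n k) ⁻¹' {j} ∩
          ({x | Ps k j x m} ∩ ⋂ (i : ℕ) (_ : i < m), {x | Ps k j x i}ᶜ) := by
        ext x
        simp only [mem_preimage, mem_singleton_iff, mem_iUnion, mem_inter_iff, mem_setOf_eq,
          mem_iInter, mem_compl_iff]
        constructor
        · intro hx
          refine ⟨n k x, rfl, ?_⟩
          rw [hnS k x, Nat.find_eq_iff] at hx
          exact ⟨hx.1, fun i hi => hx.2 i hi⟩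
        · rintro ⟨j, hj, h1, h2⟩
          rw [hnS k x, Nat.find_eq_iff]
          rw [← hj] at h1 h2
          exact ⟨h1, fun i hi => h2 i hi⟩
      rw [key]
      apply MeasurableSet.iUnion
      intro j
      exact (ih (measurableSet_singleton j)).inter
        ((hPsm k j m).inter (MeasurableSet.iInter fun i => MeasurableSet.iInter fun _ =>
          (hPsm k j i).compl))
  have hvm : ∀ k, Measurable (fun x => e (n k x)) := fun k =>
    (measurable_from_top (f := e)).comp (hnm k)
  have hcauchy : ∀ x, CauchySeq (fun k => e (n k x)) := by
    intro x
    apply cauchySeq_of_le_geometric (1/2 : ℝ) 4 (by norm_num)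
    intro k
    have := hstep k x
    rw [dist_comm] at this
    calc dist (e (n k x)) (e (n (k+1) x)) ≤ r k + r (k+1) := this
      _ ≤ 2 * r k := by have := hrle k; linarith
      _ ≤ 4 * (1/2)^k := by rw [hrk]; nlinarith [pow_pos (by norm_num : (0:ℝ) < 1/2) k]
  have hlim : ∀ x, ∃ L, Filter.Tendsto (fun k => e (n k x)) Filter.atTop (nhds L) :=
    fun x => cauchySeq_tendsto_of_complete (hcauchy x)
  refine ⟨fun x => (hlim x).choose, ?_, ?_⟩
  · apply measurable_of_tendsto_metrizable' (f := fun k x => e (n k x)) Filter.atTop hvm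
    rw [tendsto_pi_nhds]
    exact fun x => (hlim x).choose_spec
  · intro x
    set v : EuclideanSpace ℝ (Fin N) := (hlim x).choose with hv
    have hvt : Filter.Tendsto (fun k => e (n k x)) Filter.atTop (nhds v) :=
      (hlim x).choose_spec
    have hdist : ∀ k, infDist v (S x) ≤ r k + dist v (e (n k x)) := by
      intro k
      obtain ⟨s, hsS, hsB⟩ := hinv k x
      calc infDist v (S x) ≤ dist v s := infDist_le_dist_of_mem hsS
        _ ≤ dist v (e (n k x)) + dist (e (n k x)) s := dist_triangle _ _ _
        _ ≤ dist v (e (n k x)) + r k := by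
            rw [dist_comm (e (n k x)) s]
            exact add_le_add le_rfl (mem_closedBall.mp hsB)
        _ = r k + dist v (e (n k x)) := add_comm _ _
    have htend : Filter.Tendsto (fun k => r k + dist v (e (n k x)))
        Filter.atTop (nhds 0) := by
      have h2 : Filter.Tendsto (fun k => dist v (e (n k x))) Filter.atTop (nhds 0) := by
        have := Filter.Tendsto.dist (tendsto_const_nhds (x := v)) hvt
        simpa using this
      simpa using hrlim.add h2
    have h0 : infDist v (S x) ≤ 0 := ge_of_tendsto' htend hdist
    exact ((hcpt x).isClosed.mem_iff_infDist_zero (hne x)).mpr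
      (le_antisymm h0 infDist_nonneg)
open scoped ENNReal

lemma tangent_infEdist_measurable {N : ℕ} (K : Set (EuclideanSpace ℝ (Fin N)))
    (hKne : K.Nonempty) (p : EuclideanSpace ℝ (Fin N)) :
    Measurable (fun y : EuclideanSpace ℝ (Fin N) =>
      EMetric.infEdist p (closure (⋃ h ∈ Set.Ioi (0:ℝ), (fun k => h⁻¹ • (k - y)) '' K))) := by
  classical
  haveI : Nonempty ↥K := hKne.to_subtype
  set dK : ℕ → EuclideanSpace ℝ (Fin N) := fun n => (TopologicalSpace.denseSeq ↥K n : _)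
    with hdK_def
  have hdKmem : ∀ n, dK n ∈ K := fun n => (TopologicalSpace.denseSeq ↥K n).2
  have hdKd : ∀ k ∈ K, ∀ ε : ℝ, 0 < ε → ∃ n, dist (dK n) k < ε := by
    intro k hk ε hε
    obtain ⟨n, hn⟩ := (TopologicalSpace.denseRange_denseSeq ↥K).exists_dist_lt ⟨k, hk⟩ hε
    exact ⟨n, by rw [dist_comm]; exact (by simpa [Subtype.dist_eq] using hn)⟩
  have key : ∀ y, EMetric.infEdist p
      (closure (⋃ h ∈ Set.Ioi (0:ℝ), (fun k => h⁻¹ • (k - y)) '' K)) =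
      ⨅ i : {q : ℚ // (0:ℝ) < (q:ℝ)} × ℕ, edist p (((i.1.1 : ℝ))⁻¹ • (dK i.2 - y)) := by
    intro y
    show infEDist _ _ = _
    rw [infEDist_closure]
    apply le_antisymm
    · apply le_iInf
      rintro ⟨⟨q, hq⟩, n⟩
      apply infEdist_le_edist_of_mem
      have : ((q:ℝ))⁻¹ • (dK n - y) ∈ (fun k => ((q:ℝ))⁻¹ • (k - y)) '' K :=
        mem_image_of_mem _ (hdKmem n)
      exact mem_biUnion (show ((q:ℝ)) ∈ Set.Ioi (0:ℝ) from hq) this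
    · rw [le_infEdist]
      rintro w hw
      rw [mem_iUnion₂] at hw
      obtain ⟨h, hh, hwimg⟩ := hw
      obtain ⟨k, hk, hkw⟩ := hwimg
      apply ENNReal.le_of_forall_pos_le_add
      intro ε hε _
      set c : ℝ × EuclideanSpace ℝ (Fin N) → EuclideanSpace ℝ (Fin N) :=
        fun z => z.1⁻¹ • (z.2 - y) with hc_def
      have hcont : ContinuousAt c (h, k) := by
        apply ContinuousAt.smul (f := fun z : ℝ × EuclideanSpace ℝ (Fin N) => z.1⁻¹) (g := fun z => z.2 - y)
        · exact (continuousAt_fst).inv₀ (ne_of_gt hh)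
        · exact (continuousAt_snd).sub continuousAt_const
      rw [Metric.continuousAt_iff] at hcont
      obtain ⟨δ, hδ, hδp⟩ := hcont (ε:ℝ) (by exact_mod_cast hε)
      have hθ : (0:ℝ) < min δ h := lt_min hδ hh
      obtain ⟨q, hq1, hq2⟩ := exists_rat_btwn (show h - min δ h < h by linarith)
      have hqpos : (0:ℝ) < (q:ℝ) := by
        have : h - min δ h ≥ 0 := by
          have := min_le_right δ h; linarith
        linarith
      obtain ⟨n, hn⟩ := hdKd k hk δ hδ
      have hdist : dist (((q:ℝ)), dK n) (h, k) < δ := by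
        rw [Prod.dist_eq]
        apply max_lt
        · rw [Real.dist_eq, abs_sub_lt_iff]
          have h1 := min_le_left δ h
          constructor <;> linarith
        · exact hn
      have hcd := hδp hdist
      have hcw : c (h, k) = w := hkw
      have e1 : (⨅ i : {q : ℚ // (0:ℝ) < (q:ℝ)} × ℕ,
          edist p (((i.1.1 : ℝ))⁻¹ • (dK i.2 - y))) ≤ edist p (c ((q:ℝ), dK n)) :=
        iInf_le _ (⟨⟨q, hqpos⟩, n⟩ : {q : ℚ // (0:ℝ) < (q:ℝ)} × ℕ)
      calc (⨅ i : {q : ℚ // (0:ℝ) < (q:ℝ)} × ℕ, edist p (((i.1.1 : ℝ))⁻¹ • (dK i.2 - y)))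
          ≤ edist p (c ((q:ℝ), dK n)) := e1
        _ ≤ edist p w + edist w (c ((q:ℝ), dK n)) := edist_triangle _ _ _
        _ ≤ edist p w + (ε : ℝ≥0∞) := by
            apply add_le_add le_rfl
            rw [← hcw, edist_comm]
            rw [show ((ε : ℝ≥0∞)) = ENNReal.ofReal (ε:ℝ) from (ENNReal.ofReal_coe_nnreal).symm]
            exact (edist_lt_ofReal.mpr hcd).le
  have hrw : (fun y : EuclideanSpace ℝ (Fin N) =>
      EMetric.infEdist p (closure (⋃ h ∈ Set.Ioi (0:ℝ), (fun k => h⁻¹ • (k - y)) '' K))) =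
      (fun y => ⨅ i : {q : ℚ // (0:ℝ) < (q:ℝ)} × ℕ, edist p (((i.1.1 : ℝ))⁻¹ • (dK i.2 - y))) :=
    funext key
  rw [hrw]
  apply Measurable.iInf
  intro i
  apply Continuous.measurable
  exact Continuous.edist continuous_const (by fun_prop)

lemma phi_infEdist_lsc {M N : ℕ}
    (Ω : Set (EuclideanSpace ℝ (Fin M))) (K : Set (EuclideanSpace ℝ (Fin N)))
    (φ : ℝ → EuclideanSpace ℝ (Fin M) → EuclideanSpace ℝ (Fin N) →
      Set (EuclideanSpace ℝ (Fin N)))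
    (t : ℝ) (ht : t ∈ Set.Icc (0:ℝ) 1)
    (hφusc : ∀ t₀ ∈ Set.Icc (0:ℝ) 1, ∀ x₀ ∈ Ω, ∀ y₀ ∈ K,
      ∀ V : Set (EuclideanSpace ℝ (Fin N)), IsOpen V → φ t₀ x₀ y₀ ⊆ V →
        ∃ δ > (0:ℝ), ∀ t ∈ Set.Icc (0:ℝ) 1, ∀ x ∈ Ω, ∀ y ∈ K,
          |t - t₀| < δ → ‖x - x₀‖ < δ → ‖y - y₀‖ < δ → φ t x y ⊆ V)
    (p : EuclideanSpace ℝ (Fin N)) :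
    LowerSemicontinuous (fun z : ↥(Ω ×ˢ K) =>
      EMetric.infEdist p (φ t z.1.1 z.1.2)) := by
  intro z₀ b hb
  have hz₀ : z₀.1.1 ∈ Ω ∧ z₀.1.2 ∈ K := z₀.2
  obtain ⟨b', hb1', hb2'⟩ := exists_between hb
  set V : Set (EuclideanSpace ℝ (Fin N)) := {w | b' < edist p w} with hV_def
  have hVopen : IsOpen V := isOpen_lt continuous_const (continuous_const.edist continuous_id)
  have hVsub : φ t z₀.1.1 z₀.1.2 ⊆ V := fun w hw =>
    lt_of_lt_of_le hb2' (infEdist_le_edist_of_mem hw)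
  obtain ⟨δ, hδ, hδp⟩ := hφusc t ht _ hz₀.1 _ hz₀.2 V hVopen hVsub
  have hc1 : Continuous (fun z : ↥(Ω ×ˢ K) => ‖z.1.1 - z₀.1.1‖) :=
    ((continuous_fst.comp continuous_subtype_val).sub continuous_const).norm
  have hc2 : Continuous (fun z : ↥(Ω ×ˢ K) => ‖z.1.2 - z₀.1.2‖) :=
    ((continuous_snd.comp continuous_subtype_val).sub continuous_const).norm
  have hev : ∀ᶠ z in nhds z₀, ‖z.1.1 - z₀.1.1‖ < δ ∧
      ‖z.1.2 - z₀.1.2‖ < δ := by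
    apply IsOpen.mem_nhds
    · exact (isOpen_Iio.preimage hc1).inter (isOpen_Iio.preimage hc2)
    · constructor <;> · show ‖_ - _‖ < δ; rw [sub_self]; simpa using hδ
  filter_upwards [hev] with z hz
  have hz2 : z.1.1 ∈ Ω ∧ z.1.2 ∈ K := z.2
  have hsub := hδp t ht _ hz2.1 _ hz2.2 (by simpa using hδ) hz.1 hz.2
  refine lt_of_lt_of_le hb1' (le_infEdist.mpr fun w hw => ?_)
  exact (le_of_lt (hsub hw : b' < edist p w))

/-- Let `Ω ⊆ ℝ^M` be nonempty bounded open, `K ⊆ ℝ^N` nonempty closed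
convex, and `φ` usc with convex compact values, with growth `|v| ≤ α(x) + c|y|`
(`α ∈ L²(Ω)`), and tangent to `K`: `φ(t,x,y) ∩ T_K(y) ≠ ∅`.  Then for every `t ∈ [0,1]` and
every `u ∈ L²(Ω,ℝ^N)` with `u(x) ∈ K` a.e. there exists a measurable square-integrable
selection `v` with `v(x) ∈ φ(t,x,u(x)) ∩ T_K(u(x))` a.e. on `Ω`. -/
theorem tangent_square_integrable_selection
    {M N : ℕ}
    (Ω : Set (EuclideanSpace ℝ (Fin M))) (hΩne : Ω.Nonempty)
    (hΩbdd : Bornology.IsBounded Ω) (hΩopen : IsOpen Ω)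
    (K : Set (EuclideanSpace ℝ (Fin N))) (hKne : K.Nonempty)
    (hKcl : IsClosed K) (hKconv : Convex ℝ K)
    (φ : ℝ → EuclideanSpace ℝ (Fin M) → EuclideanSpace ℝ (Fin N) →
      Set (EuclideanSpace ℝ (Fin N)))
    (hφne : ∀ t ∈ Set.Icc (0:ℝ) 1, ∀ x ∈ Ω, ∀ y ∈ K, (φ t x y).Nonempty)
    (hφconv : ∀ t ∈ Set.Icc (0:ℝ) 1, ∀ x ∈ Ω, ∀ y ∈ K, Convex ℝ (φ t x y))
    (hφcpt : ∀ t ∈ Set.Icc (0:ℝ) 1, ∀ x ∈ Ω, ∀ y ∈ K, IsCompact (φ t x y))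
    (hφusc : ∀ t₀ ∈ Set.Icc (0:ℝ) 1, ∀ x₀ ∈ Ω, ∀ y₀ ∈ K,
      ∀ V : Set (EuclideanSpace ℝ (Fin N)), IsOpen V → φ t₀ x₀ y₀ ⊆ V →
        ∃ δ > (0:ℝ), ∀ t ∈ Set.Icc (0:ℝ) 1, ∀ x ∈ Ω, ∀ y ∈ K,
          |t - t₀| < δ → ‖x - x₀‖ < δ → ‖y - y₀‖ < δ → φ t x y ⊆ V)
    (α : EuclideanSpace ℝ (Fin M) → ℝ)
    (hα : MemLp α 2 (volume.restrict Ω)) (c : ℝ) (hc : 0 < c)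
    (hgrowth : ∀ t ∈ Set.Icc (0:ℝ) 1, ∀ x ∈ Ω, ∀ y ∈ K, ∀ v ∈ φ t x y,
      ‖v‖ ≤ α x + c * ‖y‖)
    -- tangency of φ to K
    (hφtan : ∀ t ∈ Set.Icc (0:ℝ) 1, ∀ x ∈ Ω, ∀ y ∈ K,
      (φ t x y ∩
        closure (⋃ h ∈ Set.Ioi (0:ℝ), (fun k => h⁻¹ • (k - y)) '' K)).Nonempty) :
    ∀ t ∈ Set.Icc (0:ℝ) 1,
      ∀ u : EuclideanSpace ℝ (Fin M) → EuclideanSpace ℝ (Fin N),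
        MemLp u 2 (volume.restrict Ω) →
        (∀ᵐ x ∂(volume.restrict Ω), u x ∈ K) →
        ∃ v : EuclideanSpace ℝ (Fin M) → EuclideanSpace ℝ (Fin N),
          Measurable v ∧ MemLp v 2 (volume.restrict Ω) ∧
          ∀ᵐ x ∂(volume.restrict Ω), v x ∈ φ t x (u x) ∩
            closure (⋃ h ∈ Set.Ioi (0:ℝ), (fun k => h⁻¹ • (k - u x)) '' K) := by
  intro t ht u hu huK
  classical
  obtain ⟨u', hu'sm, hu'eq⟩ : ∃ u', StronglyMeasurable u' ∧
      u =ᵐ[volume.restrict Ω] u' :=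
    ⟨hu.1.mk u, hu.1.stronglyMeasurable_mk, hu.1.ae_eq_mk⟩
  have hu'm : Measurable u' := hu'sm.measurable
  set A : Set (EuclideanSpace ℝ (Fin M)) := Ω ∩ u' ⁻¹' K with hA_def
  have hAmeas : MeasurableSet A :=
    hΩopen.measurableSet.inter (hKcl.measurableSet.preimage hu'm)
  set T : EuclideanSpace ℝ (Fin N) → Set (EuclideanSpace ℝ (Fin N)) :=
    fun y => closure (⋃ h ∈ Set.Ioi (0:ℝ), (fun k => h⁻¹ • (k - y)) '' K) with hT_def
  set S : EuclideanSpace ℝ (Fin M) → Set (EuclideanSpace ℝ (Fin N)) :=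
    fun x => if x ∈ A then φ t x (u' x) ∩ T (u' x) else {0} with hS_def
  have hSA : ∀ x ∈ A, S x = φ t x (u' x) ∩ T (u' x) := fun x hx => if_pos hx
  have hSnA : ∀ x ∉ A, S x = ({0} : Set (EuclideanSpace ℝ (Fin N))) := fun x hx => if_neg hx
  have hTclosed : ∀ y, IsClosed (T y) := fun y => isClosed_closure
  have hSne : ∀ x, (S x).Nonempty := by
    intro x
    by_cases hx : x ∈ A
    · rw [hSA x hx]; exact hφtan t ht x hx.1 (u' x) hx.2
    · rw [hSnA x hx]; exact ⟨0, rfl⟩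
  have hScpt : ∀ x, IsCompact (S x) := by
    intro x
    by_cases hx : x ∈ A
    · rw [hSA x hx]; exact (hφcpt t ht x hx.1 (u' x) hx.2).inter_right (hTclosed _)
    · rw [hSnA x hx]; exact isCompact_singleton
  haveI : Nonempty (EuclideanSpace ℝ (Fin N)) := ⟨0⟩
  obtain ⟨e, he⟩ : ∃ e : ℕ → EuclideanSpace ℝ (Fin N), DenseRange e :=
    ⟨TopologicalSpace.denseSeq _, TopologicalSpace.denseRange_denseSeq _⟩
  have hf1 : ∀ p, Measurable (A.indicator (fun x => EMetric.infEdist p (φ t x (u' x)))) := by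
    intro p
    have hmsub : Measurable (fun z : ↥(Ω ×ˢ K) => EMetric.infEdist p (φ t z.1.1 z.1.2)) :=
      (phi_infEdist_lsc Ω K φ t ht hφusc p).measurable
    have hmap : Measurable (fun a : ↥A =>
        (⟨(a.1, u' a.1), Set.mem_prod.mpr ⟨a.2.1, a.2.2⟩⟩ : ↥(Ω ×ˢ K))) :=
      Measurable.subtype_mk (measurable_subtype_coe.prodMk (hu'm.comp measurable_subtype_coe))
    have hcomp : Measurable (fun a : ↥A =>
        EMetric.infEdist p (φ t (a : EuclideanSpace ℝ (Fin M)) (u' a))) := hmsub.comp hmap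
    have hext : A.indicator (fun x => EMetric.infEdist p (φ t x (u' x))) =
        Function.extend (Subtype.val : ↥A → EuclideanSpace ℝ (Fin M))
          (fun a => EMetric.infEdist p (φ t (a : EuclideanSpace ℝ (Fin M)) (u' a)))
          (fun _ => 0) := by
      funext x
      by_cases hx : x ∈ A
      · rw [Set.indicator_of_mem hx]
        exact (Function.Injective.extend_apply Subtype.coe_injective
          (fun a : ↥A => EMetric.infEdist p (φ t (a : EuclideanSpace ℝ (Fin M)) (u' a)))
          (fun _ => 0) (⟨x, hx⟩ : ↥A)).symm
      · rw [Set.indicator_of_notMem hx]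
        have hnb : ¬∃ a : ↥A, (a : EuclideanSpace ℝ (Fin M)) = x := by
          rintro ⟨a, ha⟩; exact hx (ha ▸ a.2)
        rw [Function.extend_apply' _ _ _ hnb]
    rw [hext]
    exact (MeasurableEmbedding.subtype_coe hAmeas).measurable_extend hcomp measurable_const
  have hf2 : ∀ p, Measurable (A.indicator (fun x => EMetric.infEdist p (T (u' x)))) := by
    intro p
    exact ((tangent_infEdist_measurable K hKne p).comp hu'm).indicator hAmeas
  have hmeas : ∀ (q : EuclideanSpace ℝ (Fin N)) (r : ℝ), 0 < r →
      MeasurableSet {x | (S x ∩ closedBall q r).Nonempty} := by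
    intro q r hrpos
    set G : EuclideanSpace ℝ (Fin M) → ℝ≥0∞ := fun x => ⨅ m : ℕ,
      (A.indicator (fun x => EMetric.infEdist (e m) (φ t x (u' x))) x +
       A.indicator (fun x => EMetric.infEdist (e m) (T (u' x))) x +
       A.indicator (fun _ => EMetric.infEdist (e m) (closedBall q r)) x) with hG_def
    have hGmeas : Measurable G :=
      Measurable.iInf fun m => ((hf1 (e m)).add (hf2 (e m))).add
        (measurable_const.indicator hAmeas)
    have hGA : ∀ x ∈ A, G x = ⨅ m : ℕ,
        (EMetric.infEdist (e m) (φ t x (u' x)) + EMetric.infEdist (e m) (T (u' x)) +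
         EMetric.infEdist (e m) (closedBall q r)) := by
      intro x hx
      simp only [hG_def]
      exact iInf_congr fun m => by
        rw [Set.indicator_of_mem hx, Set.indicator_of_mem hx, Set.indicator_of_mem hx]
    have hset : {x | (S x ∩ closedBall q r).Nonempty} =
        (A ∩ G ⁻¹' {0}) ∪
        (Aᶜ ∩ {_x : EuclideanSpace ℝ (Fin M) |
          (0 : EuclideanSpace ℝ (Fin N)) ∈ closedBall q r}) := by
      ext x
      by_cases hx : x ∈ A
      · simp only [Set.mem_setOf_eq, Set.mem_union, Set.mem_inter_iff, Set.mem_compl_iff, hx,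
          not_true_eq_false, false_and, or_false, Set.mem_preimage, Set.mem_singleton_iff,
          true_and]
        rw [hSA x hx, hGA x hx]
        constructor
        · rintro ⟨w, ⟨hwφ, hwT⟩, hwB⟩
          refine le_antisymm ?_ zero_le
          refine ENNReal.le_of_forall_pos_le_add fun ε hε _ => ?_
          have hε3 : (0:ℝ) < (ε:ℝ)/3 := by positivity
          obtain ⟨m, hm⟩ := he.exists_dist_lt w hε3
          have hed : edist (e m) w ≤ ENNReal.ofReal ((ε:ℝ)/3) := by
            rw [edist_comm]; exact (edist_lt_ofReal.mpr hm).le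
          have h1 : EMetric.infEdist (e m) (φ t x (u' x)) ≤ ENNReal.ofReal ((ε:ℝ)/3) :=
            le_trans (infEdist_le_edist_of_mem hwφ) hed
          have h2 : EMetric.infEdist (e m) (T (u' x)) ≤ ENNReal.ofReal ((ε:ℝ)/3) :=
            le_trans (infEdist_le_edist_of_mem hwT) hed
          have h3 : EMetric.infEdist (e m) (closedBall q r) ≤ ENNReal.ofReal ((ε:ℝ)/3) :=
            le_trans (infEdist_le_edist_of_mem hwB) hed
          calc (⨅ m : ℕ,
              (EMetric.infEdist (e m) (φ t x (u' x)) + EMetric.infEdist (e m) (T (u' x)) +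
               EMetric.infEdist (e m) (closedBall q r)))
              ≤ EMetric.infEdist (e m) (φ t x (u' x)) + EMetric.infEdist (e m) (T (u' x)) +
                EMetric.infEdist (e m) (closedBall q r) := iInf_le _ m
            _ ≤ ENNReal.ofReal ((ε:ℝ)/3) + ENNReal.ofReal ((ε:ℝ)/3) + ENNReal.ofReal ((ε:ℝ)/3) :=
                add_le_add (add_le_add h1 h2) h3
            _ = ENNReal.ofReal ((ε:ℝ)/3 + (ε:ℝ)/3 + (ε:ℝ)/3) := by
                rw [← ENNReal.ofReal_add (by positivity) (by positivity),
                  ← ENNReal.ofReal_add (by positivity) (by positivity)]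
            _ = (ε : ℝ≥0∞) := by
                have h9 : (ε:ℝ)/3 + (ε:ℝ)/3 + (ε:ℝ)/3 = (ε:ℝ) := by ring
                rw [h9, ENNReal.ofReal_coe_nnreal]
            _ ≤ 0 + (ε : ℝ≥0∞) := by rw [zero_add]
        · intro hG0
          have hj : ∀ j : ℕ, ∃ m : ℕ,
              EMetric.infEdist (e m) (φ t x (u' x)) + EMetric.infEdist (e m) (T (u' x)) +
              EMetric.infEdist (e m) (closedBall q r) < ENNReal.ofReal (1/((j:ℝ)+1)) := by
            intro j
            have hpos : (0:ℝ≥0∞) < ENNReal.ofReal (1/((j:ℝ)+1)) :=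
              ENNReal.ofReal_pos.mpr (by positivity)
            rw [← hG0] at hpos
            exact iInf_lt_iff.mp hpos
          choose m hm using hj
          have hc1 : ∀ j, ∃ w ∈ φ t x (u' x),
              edist (e (m j)) w < ENNReal.ofReal (1/((j:ℝ)+1)) := by
            intro j
            apply EMetric.infEdist_lt_iff.mp
            exact lt_of_le_of_lt (le_self_add.trans le_self_add) (hm j)
          choose w hwφ hwe using hc1
          obtain ⟨wl, hwl, σ, hσmono, hσtend⟩ :=
            (hφcpt t ht x hx.1 (u' x) hx.2).tendsto_subseq hwφ
          have hdj : ∀ j, dist (e (m j)) (w j) < 1/((j:ℝ)+1) :=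
            fun j => edist_lt_ofReal.mp (hwe j)
          have hrec : Filter.Tendsto (fun j : ℕ => (1:ℝ)/((j:ℝ)+1)) Filter.atTop (nhds 0) :=
            tendsto_one_div_add_atTop_nhds_zero_nat
          have hfrac : ∀ j : ℕ, (1:ℝ)/((σ j : ℝ)+1) ≤ 1/((j:ℝ)+1) := by
            intro j
            apply one_div_le_one_div_of_le (by positivity)
            have h : j ≤ σ j := hσmono.le_apply
            have : (j:ℝ) ≤ (σ j : ℝ) := by exact_mod_cast h
            linarith
          have hetend : Filter.Tendsto (fun j => e (m (σ j))) Filter.atTop (nhds wl) := by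
            rw [tendsto_iff_dist_tendsto_zero]
            apply squeeze_zero (g := fun j : ℕ => 1/((j:ℝ)+1) + dist (w (σ j)) wl)
              (fun j => dist_nonneg)
            · intro j
              calc dist (e (m (σ j))) wl
                  ≤ dist (e (m (σ j))) (w (σ j)) + dist (w (σ j)) wl := dist_triangle _ _ _
                _ ≤ 1/((j:ℝ)+1) + dist (w (σ j)) wl := by
                    have h1 := hdj (σ j)
                    have h2 := hfrac j
                    linarith
            · have hd2 : Filter.Tendsto (fun j => dist (w (σ j)) wl) Filter.atTop (nhds 0) :=
                tendsto_iff_dist_tendsto_zero.mp hσtend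
              simpa using hrec.add hd2
          have hofj : Filter.Tendsto (fun j : ℕ => ENNReal.ofReal (1/((j:ℝ)+1)))
              Filter.atTop (nhds 0) := by
            have h := ENNReal.tendsto_ofReal hrec
            simpa using h
          have hmemaux : ∀ (C : Set (EuclideanSpace ℝ (Fin N))), IsClosed C →
              (∀ i, EMetric.infEdist (e i) C ≤
                EMetric.infEdist (e i) (φ t x (u' x)) + EMetric.infEdist (e i) (T (u' x)) +
                EMetric.infEdist (e i) (closedBall q r)) → wl ∈ C := by
            intro C hC hle
            have hcont : Filter.Tendsto (fun j => EMetric.infEdist (e (m (σ j))) C)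
                Filter.atTop (nhds (EMetric.infEdist wl C)) :=
              (EMetric.continuous_infEdist.tendsto wl).comp hetend
            have hzero : Filter.Tendsto (fun j => EMetric.infEdist (e (m (σ j))) C)
                Filter.atTop (nhds 0) := by
              apply tendsto_of_tendsto_of_tendsto_of_le_of_le tendsto_const_nhds hofj
              · exact fun j => zero_le
              · intro j
                refine le_trans (hle (m (σ j))) (le_trans (hm (σ j)).le ?_)
                exact ENNReal.ofReal_le_ofReal (hfrac j)
            have h0 : EMetric.infEdist wl C = 0 := tendsto_nhds_unique hcont hzero
            have hmem := EMetric.mem_closure_iff_infEdist_zero.mpr h0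
            rwa [hC.closure_eq] at hmem
          have hwlT : wl ∈ T (u' x) :=
            hmemaux _ (hTclosed (u' x)) (fun i => le_add_self.trans le_self_add)
          have hwlB : wl ∈ closedBall q r :=
            hmemaux _ Metric.isClosed_closedBall (fun i => le_add_self)
          exact ⟨wl, ⟨hwl, hwlT⟩, hwlB⟩
      · simp only [Set.mem_setOf_eq, Set.mem_union, Set.mem_inter_iff, Set.mem_compl_iff, hx,
          not_false_eq_true, true_and, false_and, false_or]
        rw [hSnA x hx, Set.singleton_inter_nonempty]
    rw [hset]
    exact (hAmeas.inter (hGmeas (measurableSet_singleton 0))).union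
      (hAmeas.compl.inter (MeasurableSet.const _))
  obtain ⟨v, hvmeas, hvmem⟩ := measurable_selection_aux S hSne hScpt hmeas
  have hae : ∀ᵐ x ∂(volume.restrict Ω), x ∈ Ω ∧ u x ∈ K ∧ u x = u' x :=
    ((ae_restrict_mem hΩopen.measurableSet).and (huK.and hu'eq))
  have hkey : ∀ᵐ x ∂(volume.restrict Ω),
      v x ∈ φ t x (u x) ∩ (T (u x)) ∧ ‖v x‖ ≤ α x + c * ‖u x‖ := by
    filter_upwards [hae] with x hx
    have hxA : x ∈ A := ⟨hx.1, by rw [Set.mem_preimage, ← hx.2.2]; exact hx.2.1⟩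
    have h1 := hvmem x
    rw [hSA x hxA, ← hx.2.2] at h1
    exact ⟨h1, hgrowth t ht x hx.1 (u x) hx.2.1 (v x) h1.1⟩
  refine ⟨v, hvmeas, ?_, ?_⟩
  · have hg : MemLp (fun x => |α x| + c * ‖u x‖) 2 (volume.restrict Ω) := by
      apply MemLp.add
      · simpa [Real.norm_eq_abs] using hα.norm
      · exact hu.norm.const_mul c
    apply MemLp.of_le hg hvmeas.aestronglyMeasurable
    filter_upwards [hkey] with x hx
    have h2 : α x + c * ‖u x‖ ≤ |α x| + c * ‖u x‖ := by
      have := le_abs_self (α x); linarith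
    calc ‖v x‖ ≤ α x + c * ‖u x‖ := hx.2
      _ ≤ |α x| + c * ‖u x‖ := h2
      _ ≤ ‖|α x| + c * ‖u x‖‖ := le_abs_self _
  · filter_upwards [hkey] with x hx
    exact hx.1
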